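/- arXiv:1807.08463 — 2 statements merged into one kernel-verified Lean document; each statement's English description precedes it below -/
import Mathlib

section
/- Every connecting transition set of a tree G with at least 2 vertices has size at least |V(G)| − 2. Consequently, the minimum size of a connecting transition set of a tree with n ≥ 2 vertices is exactly n − 2. -/
variable {V : Type*}

/-- The transition consisting of the edges `ab` and `bc`, written `abc`. -/
def transitionOf (a b c : V) : Sym2 (Sym2 V) := s(s(a, b), s(b, c))

/-- `t` is a transition of `G`: an unordered pair of two distinct adjacent edges. -/
def SimpleGraph.IsTransition (G : SimpleGraph V) (t : Sym2 (Sym2 V)) : Prop :=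
  ∃ a b c, G.Adj a b ∧ G.Adj b c ∧ a ≠ c ∧ t = transitionOf a b c

/-- A list of vertices (the support of a walk) is `T`-compatible: every pair of
consecutive edges is either a transition of `T` or a backtrack. -/
def TCompatible (T : Set (Sym2 (Sym2 V))) (l : List V) : Prop :=
  ∀ (i : ℕ) (h : i + 2 < l.length),
    l[i]'(by omega) = l[i + 2]'h ∨
    transitionOf (l[i]'(by omega)) (l[i + 1]'(by omega)) (l[i + 2]'h) ∈ T

/-- `G` is `T`-connected: every two vertices are joined by a `T`-compatible walk. -/
def SimpleGraph.TConnected (G : SimpleGraph V) (T : Set (Sym2 (Sym2 V))) : Prop :=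
  ∀ u v : V, ∃ p : G.Walk u v, TCompatible T p.support

/-- `T` is a connecting transition set of `G`. -/
def SimpleGraph.ConnectingTransitionSet (G : SimpleGraph V)
    (T : Finset (Sym2 (Sym2 V))) : Prop :=
  (∀ t ∈ T, G.IsTransition t) ∧ G.TConnected ↑T

/-- `H` is a connecting hypergraph of `G`: every hyperedge has at least two vertices and
induces a connected subgraph, and every pair of distinct non-adjacent vertices is
contained in a common hyperedge. -/
def SimpleGraph.ConnectingHypergraph (G : SimpleGraph V) (H : Finset (Finset V)) : Prop :=
  (∀ E ∈ H, 2 ≤ E.card ∧ (G.induce (E : Set V)).Connected) ∧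
  ∀ u v : V, u ≠ v → ¬G.Adj u v → ∃ E ∈ H, u ∈ E ∧ v ∈ E

/-- The cost of a hypergraph: the sum over hyperedges of (size − 2). -/
def hcost (H : Finset (Finset V)) : ℕ := ∑ E ∈ H, (E.card - 2)

/-- The quantity τ(G): the sum over co-connected components `C` of `G` with `|C| ≥ 2`
of `|C| − 2` if `G[C]` is connected and `|C| − 1` otherwise. -/
noncomputable def tau {V : Type*} [Fintype V] (G : SimpleGraph V) : ℕ := by
  classical
  haveI : Fintype Gᶜ.ConnectedComponent := Fintype.ofFinite _
  exact ∑ C : Gᶜ.ConnectedComponent,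
    if 2 ≤ C.supp.ncard then
      (if (G.induce C.supp).Connected then C.supp.ncard - 2 else C.supp.ncard - 1)
    else 0

/-! ### Auxiliary lemmas -/

open SimpleGraph

lemma transitionOf_comm (a b c : V) : transitionOf a b c = transitionOf c b a := by
  unfold transitionOf; rw [Sym2.eq_iff]; exact Or.inr ⟨Sym2.eq_swap, Sym2.eq_swap⟩

lemma transitionOf_center {a b c a' b' c' : V} (hac : a ≠ c)
    (h : transitionOf a b c = transitionOf a' b' c') : b = b' := by
  unfold transitionOf at h
  rw [Sym2.eq_iff] at h
  by_contra hbb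
  rcases h with ⟨h1, h2⟩ | ⟨h1, h2⟩ <;> rw [Sym2.eq_iff] at h1 h2 <;>
    rcases h1 with ⟨e1, e2⟩ | ⟨e1, e2⟩ <;> rcases h2 with ⟨f1, f2⟩ | ⟨f1, f2⟩ <;> simp_all

lemma transitionOf_pair {a b c a' c' : V} (hac : a ≠ c)
    (hab' : a' ≠ b) (hcb' : c' ≠ b)
    (h : transitionOf a b c = transitionOf a' b c') : s(a, c) = s(a', c') := by
  unfold transitionOf at h
  rw [Sym2.eq_iff] at h
  rw [Sym2.eq_iff]
  rcases h with ⟨h1, h2⟩ | ⟨h1, h2⟩ <;> rw [Sym2.eq_iff] at h1 h2 <;>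
    rcases h1 with ⟨e1, e2⟩ | ⟨e1, e2⟩ <;> rcases h2 with ⟨f1, f2⟩ | ⟨f1, f2⟩ <;> simp_all

lemma tree_unique_nbr {G : SimpleGraph V} (htree : G.IsTree) {b x y : V}
    (hx : G.Adj b x) (hy : G.Adj b y) (w : G.Walk x y) (hw : b ∉ w.support) : x = y := by
  classical
  have hp : (w.toPath : G.Walk x y).IsPath := (w.toPath).2
  have hb : b ∉ (w.toPath : G.Walk x y).support := fun h => hw (Walk.support_toPath_subset w h)
  have h1 : (Walk.cons hx (w.toPath : G.Walk x y)).IsPath := hp.cons hb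
  have h2 : (Walk.cons hy (Walk.nil : G.Walk y y)).IsPath := by simp [hy.ne]
  have := htree.IsAcyclic.path_unique ⟨_, h1⟩ ⟨_, h2⟩
  rw [Subtype.ext_iff] at this
  have hs := congrArg SimpleGraph.Walk.support this
  simp only [Walk.support_cons, Walk.support_nil] at hs
  have := congrArg List.tail hs
  simp only [List.tail_cons] at this
  have h3 := (w.toPath : G.Walk x y).support_eq_cons
  rw [this] at h3
  exact (List.cons_eq_cons.mp h3.symm).1

lemma exists_adj_of_connected [Fintype V] {G : SimpleGraph V}
    (hconn : G.Connected) (h2 : 2 ≤ Fintype.card V) (x : V) : ∃ y, G.Adj x y := by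
  obtain ⟨y, hy⟩ := Fintype.exists_ne_of_one_lt_card (by omega) x
  obtain ⟨p⟩ := hconn x y
  cases p with
  | nil => exact absurd rfl hy.symm
  | cons h _ => exact ⟨_, h⟩

lemma preconnected_card_le {W : Type*} [Fintype W] [DecidableEq W] [Nonempty W]
    {H : SimpleGraph W} [Fintype H.edgeSet] (hp : H.Preconnected) :
    Fintype.card W ≤ H.edgeFinset.card + 1 := by
  classical
  obtain ⟨r⟩ := (inferInstance : Nonempty W)
  have key : ∀ v : W, v ≠ r → ∃ w, H.Adj v w ∧ H.dist w r < H.dist v r := by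
    intro v hv
    obtain ⟨p, hpl⟩ := (hp v r).exists_walk_length_eq_dist
    cases p with
    | nil => exact absurd rfl hv
    | @cons _ w _ h q =>
      refine ⟨w, h, ?_⟩
      have : H.dist w r ≤ q.length := SimpleGraph.dist_le q
      simp [Walk.length_cons] at hpl
      omega
  choose f hf1 hf2 using key
  have hinj : Set.InjOn (fun v : W => if h : v = r then s(r, r) else s(v, f v h))
      ↑(Finset.univ.erase r) := by
    intro a ha b hb hab
    simp only [Finset.coe_erase, Set.mem_diff, Finset.mem_coe] at ha hb
    have ha' : a ≠ r := by simpa using ha.2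
    have hb' : b ≠ r := by simpa using hb.2
    simp only [dif_neg ha', dif_neg hb'] at hab
    rw [Sym2.eq_iff] at hab
    rcases hab with ⟨h1, h2⟩ | ⟨h1, h2⟩
    · exact h1
    · exfalso
      have H1 := hf2 a ha'
      have H2 := hf2 b hb'
      rw [h2] at H1
      rw [← h1] at H2
      omega
  have hmaps : ∀ v ∈ Finset.univ.erase r,
      (if h : v = r then s(r, r) else s(v, f v h)) ∈ H.edgeFinset := by
    intro v hv
    have hv' : v ≠ r := (Finset.mem_erase.mp hv).1
    rw [dif_neg hv']
    exact SimpleGraph.mem_edgeFinset.mpr (hf1 v hv')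
  have := Finset.card_le_card_of_injOn _ hmaps hinj
  rw [Finset.card_erase_of_mem (Finset.mem_univ r), Finset.card_univ] at this
  omega

lemma tcompatible_tail {T : Set (Sym2 (Sym2 V))} {x : V} {l : List V}
    (h : TCompatible T (x :: l)) : TCompatible T l := by
  intro i hi
  have := h (i + 1) (by simp; omega)
  simpa using this

lemma tcompatible_cons {T : Set (Sym2 (Sym2 V))} {x : V} {l : List V}
    (h0 : ∀ (h : 2 ≤ l.length), x = l[1]'h ∨
      transitionOf x (l[0]'(by omega)) (l[1]'h) ∈ T)
    (hl : TCompatible T l) : TCompatible T (x :: l) := by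
  intro i hi
  match i with
  | 0 =>
    simp only [List.getElem_cons_zero, List.getElem_cons_succ]
    exact h0 (by simp at hi; omega)
  | (j + 1) =>
    simp only [List.getElem_cons_succ]
    exact hl j (by simp at hi; omega)

lemma tcompatible_short {T : Set (Sym2 (Sym2 V))} {l : List V} (h : l.length ≤ 2) :
    TCompatible T l := by
  intro i hi; omega

def expandWalk {G : SimpleGraph V} (a₀ : V → V) (ha : ∀ x, G.Adj x (a₀ x)) :
    ∀ {u v : V}, G.Walk u v → G.Walk u v
  | _, _, .nil => .nil
  | _, _, .cons h .nil => .cons h .nil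
  | _, _, .cons h (.cons h' q) =>
      .cons h (.cons (ha _) (.cons (ha _).symm (expandWalk a₀ ha (.cons h' q))))

lemma compat_expandWalk {G : SimpleGraph V} (a₀ : V → V) (ha : ∀ x, G.Adj x (a₀ x))
    (T : Set (Sym2 (Sym2 V)))
    (hstar : ∀ x y, G.Adj x y → y = a₀ x ∨ transitionOf (a₀ x) x y ∈ T) :
    ∀ {u v : V} (p : G.Walk u v), TCompatible T (a₀ u :: (expandWalk a₀ ha p).support)
  | _, _, .nil => tcompatible_short (by simp [expandWalk])
  | u, v, .cons h .nil => by
    apply tcompatible_cons _ (tcompatible_short (by simp [expandWalk]))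
    intro h2
    simp only [expandWalk, Walk.support_cons, Walk.support_nil]
    simp only [List.getElem_cons_zero, List.getElem_cons_succ]
    rcases hstar u v h with h' | h'
    · exact Or.inl h'.symm
    · exact Or.inr h'
  | u, v, .cons (v := x) h (.cons h' q) => by
    have IH := compat_expandWalk a₀ ha T hstar (.cons h' q)
    have hsup : (expandWalk a₀ ha (.cons h' q)).support
        = x :: (expandWalk a₀ ha (.cons h' q)).support.tail :=
      (expandWalk a₀ ha (.cons h' q)).support_eq_cons
    rw [hsup] at IH
    show TCompatible T (a₀ u :: (expandWalk a₀ ha (Walk.cons h (Walk.cons h' q))).support)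
    have : (expandWalk a₀ ha (Walk.cons h (Walk.cons h' q))).support
        = u :: x :: a₀ x :: (expandWalk a₀ ha (.cons h' q)).support := by
      simp [expandWalk, Walk.support_cons]
    rw [this, hsup]
    set t := (expandWalk a₀ ha (.cons h' q)).support.tail with ht
    apply tcompatible_cons
    · intro h2; simp only [List.getElem_cons_zero, List.getElem_cons_succ]
      rcases hstar u x h with h'' | h''
      · exact Or.inl h''.symm
      · exact Or.inr h''
    apply tcompatible_cons
    · intro h2; simp only [List.getElem_cons_zero, List.getElem_cons_succ]
      rcases hstar x u h.symm with h'' | h''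
      · exact Or.inl h''
      · exact Or.inr (by rw [transitionOf_comm]; exact h'')
    apply tcompatible_cons
    · intro h2; simp only [List.getElem_cons_zero, List.getElem_cons_succ]
      exact Or.inl trivial
    exact IH

/-- The local graph at `b` induced by a transition set `T`. -/
def localGraph (T : Set (Sym2 (Sym2 V))) (b : V) : SimpleGraph V where
  Adj x y := x ≠ y ∧ transitionOf x b y ∈ T
  symm := by
    constructor
    intro x y ⟨h1, h2⟩
    exact ⟨h1.symm, by rwa [transitionOf_comm]⟩
  loopless := ⟨fun x h => h.1 rfl⟩

lemma key_reach {G : SimpleGraph V} (htree : G.IsTree)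
    (T : Set (Sym2 (Sym2 V))) {b c : V} (hc : G.Adj b c)
    (l : List V) (hch : List.Chain' G.Adj l) (hcomp : TCompatible T l)
    (h0 : ∀ (h : 0 < l.length), l[0]'h = c) :
    ∀ i (hi : i < l.length), l[i]'hi = b ∨
      (∃ e, G.Adj b e ∧ (localGraph T b).Reachable c e ∧
        ∃ w : G.Walk e (l[i]'hi), b ∉ w.support) := by
  have hadj : ∀ k (hk : k + 1 < l.length), G.Adj (l[k]'(by omega)) (l[k+1]'hk) := by
    intro k hk
    have := List.isChain_iff_getElem.mp hch k (by omega)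
    simpa [List.get_eq_getElem] using this
  intro i
  induction i using Nat.strong_induction_on with
  | _ i IH =>
    intro hi
    match i with
    | 0 =>
      right
      refine ⟨c, hc, Reachable.refl c, ?_⟩
      rw [h0 hi]
      exact ⟨Walk.nil, by simp [hc.ne]⟩
    | (j + 1) =>
      by_cases hib : l[j+1]'hi = b
      · exact Or.inl hib
      right
      have hadj1 : G.Adj (l[j]'(by omega)) (l[j+1]'hi) := hadj j hi
      by_cases hjb : l[j]'(by omega) = b
      · cases j with
        | zero =>
          rw [h0 (by omega)] at hjb
          exact absurd hjb hc.ne'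
        | succ k =>
          have hadj2 : G.Adj (l[k]'(by omega)) (l[k+1]'(by omega)) := hadj k (by omega)
          rw [hjb] at hadj1 hadj2
          have hkb : l[k]'(by omega) ≠ b := hadj2.ne
          rcases IH k (by omega) (by omega) with h | ⟨e, he, hre, w, hw⟩
          · exact absurd h hkb
          have heq : e = l[k]'(by omega) := tree_unique_nbr htree he hadj2.symm w hw
          rw [heq] at hre
          rcases hcomp k (by omega) with heq2 | htr
          · refine ⟨l[k+2]'(by omega), hadj1, ?_, Walk.nil, by simp only [Walk.support_nil, List.mem_singleton]; exact fun hh => hib hh.symm⟩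
            rw [← heq2]; exact hre
          · rw [hjb] at htr
            by_cases hsame : l[k]'(by omega) = l[k+2]'(by omega)
            · refine ⟨l[k+2]'(by omega), hadj1, ?_, Walk.nil, by simp only [Walk.support_nil, List.mem_singleton]; exact fun hh => hib hh.symm⟩
              rw [← hsame]; exact hre
            · refine ⟨l[k+2]'(by omega), hadj1, ?_, Walk.nil, by simp only [Walk.support_nil, List.mem_singleton]; exact fun hh => hib hh.symm⟩
              exact hre.trans (SimpleGraph.Adj.reachable ⟨hsame, htr⟩)
      · rcases IH j (by omega) (by omega) with h | ⟨e, he, hre, w, hw⟩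
        · exact absurd h hjb
        refine ⟨e, he, hre, w.concat hadj1, ?_⟩
        rw [Walk.support_concat]
        simp only [List.concat_eq_append, List.mem_append, List.mem_singleton]
        rintro (h | h)
        · exact hw h
        · exact hib h.symm

lemma reach_nbrs {G : SimpleGraph V} (htree : G.IsTree) (T : Set (Sym2 (Sym2 V)))
    (hTc : G.TConnected T) {b c d : V} (hc : G.Adj b c) (hd : G.Adj b d) :
    (localGraph T b).Reachable c d := by
  obtain ⟨p, hcomp⟩ := hTc c d
  have hch := p.isChain_adj_support
  have hlen : 0 < p.support.length := by
    rw [p.support_eq_cons]; simp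
  have h0 : ∀ (h : 0 < p.support.length), p.support[0]'h = c := by
    intro h
    have := p.support_eq_cons
    rw [← List.head_eq_getElem_zero (by simp)]
    exact p.head_support
  have hlast : p.support[p.support.length - 1]'(by omega) = d := by
    rw [← List.getLast_eq_getElem]
    exact p.getLast_support
  rcases key_reach htree T hc p.support hch hcomp h0 (p.support.length - 1) (by omega)
    with h | ⟨e, he, hre, w, hw⟩
  · rw [hlast] at h
    exact absurd h hd.ne'
  · have hw' : b ∉ (w.copy rfl hlast).support := by rwa [Walk.support_copy]
    have : e = d := tree_unique_nbr htree he hd (w.copy rfl hlast) hw'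
    rw [← this]; exact hre

lemma localGraph_adj_mem {G : SimpleGraph V} {T : Finset (Sym2 (Sym2 V))}
    (hT : ∀ t ∈ T, G.IsTransition t) {b x y : V}
    (h : (localGraph (↑T : Set (Sym2 (Sym2 V))) b).Adj x y) : G.Adj b x ∧ G.Adj b y := by
  obtain ⟨hxy, hmem⟩ := h
  obtain ⟨a', b', c', h1, h2, h3, h4⟩ := hT _ hmem
  have hb : b = b' := transitionOf_center hxy h4
  subst hb
  have hpair : s(x, y) = s(a', c') := transitionOf_pair hxy h1.ne h2.ne' h4
  rw [Sym2.eq_iff] at hpair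
  rcases hpair with ⟨e1, e2⟩ | ⟨e1, e2⟩
  · exact ⟨by rw [e1]; exact h1.symm, by rw [e2]; exact h2⟩
  · exact ⟨by rw [e1]; exact h2, by rw [e2]; exact h1.symm⟩

lemma lift_reach [Fintype V] [DecidableEq V] {G : SimpleGraph V} [DecidableRel G.Adj]
    {T : Finset (Sym2 (Sym2 V))} (hT : ∀ t ∈ T, G.IsTransition t) (b : V) :
    ∀ {x y : V} (_ : (localGraph (↑T : Set (Sym2 (Sym2 V))) b).Walk x y)
      (hx : x ∈ G.neighborFinset b) (hy : y ∈ G.neighborFinset b),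
      (SimpleGraph.comap (fun z => (z : V))
        (localGraph (↑T : Set (Sym2 (Sym2 V))) b) :
          SimpleGraph ↥(G.neighborFinset b)).Reachable ⟨x, hx⟩ ⟨y, hy⟩
  | x, _, .nil, hx, hy => Reachable.refl _
  | x, y, .cons (v := z) h p, hx, hy => by
    have hz : z ∈ G.neighborFinset b :=
      (G.mem_neighborFinset b z).mpr (localGraph_adj_mem hT h).2
    have hadj : (SimpleGraph.comap (fun z => (z : V))
        (localGraph (↑T : Set (Sym2 (Sym2 V))) b) :
          SimpleGraph ↥(G.neighborFinset b)).Adj ⟨x, hx⟩ ⟨z, hz⟩ := h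
    exact hadj.reachable.trans (lift_reach hT b p hz hy)

lemma sum_deg_sub_one [Fintype V] {G : SimpleGraph V} [DecidableRel G.Adj]
    (htree : G.IsTree) (h2 : 2 ≤ Fintype.card V) :
    ∑ b : V, (G.degree b - 1) = Fintype.card V - 2 := by
  classical
  have hdeg1 : ∀ b : V, 1 ≤ G.degree b := by
    intro b
    obtain ⟨y, hy⟩ := exists_adj_of_connected htree.isConnected h2 b
    exact (G.degree_pos_iff_exists_adj b).mpr ⟨y, hy⟩
  have hdegsum : ∑ b : V, G.degree b = 2 * (Fintype.card V - 1) := by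
    rw [SimpleGraph.sum_degrees_eq_twice_card_edges]
    have hce : G.edgeFinset.card + 1 = Fintype.card V := htree.card_edgeFinset
    omega
  have hsum1 : ∑ b : V, (G.degree b - 1) + Fintype.card V = ∑ b : V, G.degree b := by
    calc ∑ b : V, (G.degree b - 1) + Fintype.card V
        = ∑ b : V, ((G.degree b - 1) + 1) := by
          rw [Finset.sum_add_distrib, Finset.sum_const, smul_eq_mul, mul_one,
            Finset.card_univ]
      _ = ∑ b : V, G.degree b :=
          Finset.sum_congr rfl (fun b _ => by have := hdeg1 b; omega)
  omega

lemma lower_bound {V : Type*} [Fintype V] [DecidableEq V] (G : SimpleGraph V)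
    (htree : G.IsTree) (h2 : 2 ≤ Fintype.card V) (T : Finset (Sym2 (Sym2 V)))
    (hT : G.ConnectingTransitionSet T) : Fintype.card V - 2 ≤ T.card := by
  classical
  haveI : DecidableRel G.Adj := Classical.decRel _
  haveI : Nonempty V := Fintype.card_pos_iff.mp (by omega)
  set P : Sym2 (Sym2 V) → V → Prop :=
    fun t b' => ∃ a c, G.Adj a b' ∧ G.Adj b' c ∧ a ≠ c ∧ t = transitionOf a b' c with hP
  set center : Sym2 (Sym2 V) → V :=
    fun t => if h : ∃ b', P t b' then h.choose else Classical.arbitrary V with hcenter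
  have center_eq : ∀ {a b c : V}, G.Adj a b → G.Adj b c → a ≠ c →
      center (transitionOf a b c) = b := by
    intro a b c hab hbc hac
    have hex : ∃ b', P (transitionOf a b c) b' := ⟨b, a, c, hab, hbc, hac, rfl⟩
    rw [hcenter]
    simp only
    rw [dif_pos hex]
    obtain ⟨a', c', h1, h2', h3, h4⟩ := hex.choose_spec
    exact (transitionOf_center hac h4).symm
  have hfib := Finset.card_eq_sum_card_fiberwise (f := center) (s := T)
    (t := Finset.univ) (fun t _ => Finset.mem_univ _)
  have hdeg : ∀ b : V, G.degree b - 1 ≤ (T.filter (fun t => center t = b)).card := by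
    intro b
    set Gb := localGraph (↑T : Set (Sym2 (Sym2 V))) b with hGb
    set Nb := G.neighborFinset b with hNb
    haveI : Nonempty ↥Nb := by
      obtain ⟨y, hy⟩ := exists_adj_of_connected htree.isConnected h2 b
      exact ⟨⟨y, (G.mem_neighborFinset b y).mpr hy⟩⟩
    set Hb : SimpleGraph ↥Nb := SimpleGraph.comap (fun x => (x : V)) Gb with hHb
    haveI : Fintype Hb.edgeSet := Fintype.ofFinite _
    have hHconn : Hb.Preconnected := by
      rintro ⟨x, hx⟩ ⟨y, hy⟩
      have hbx : G.Adj b x := (G.mem_neighborFinset b x).mp hx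
      have hby : G.Adj b y := (G.mem_neighborFinset b y).mp hy
      obtain ⟨p⟩ := reach_nbrs htree (↑T) hT.2 hbx hby
      exact lift_reach hT.1 b p hx hy
    have hcard : Fintype.card ↥Nb ≤ Hb.edgeFinset.card + 1 := preconnected_card_le hHconn
    have hcardNb : Fintype.card ↥Nb = G.degree b := by
      rw [Fintype.card_coe]
      rfl
    set g : Sym2 ↥Nb → Sym2 (Sym2 V) :=
      Sym2.lift ⟨fun x y => transitionOf (x : V) b (y : V),
        fun x y => transitionOf_comm _ _ _⟩ with hg
    have key2 : ∀ e ∈ Hb.edgeFinset, g e ∈ T.filter (fun t => center t = b) := by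
      intro e he
      obtain ⟨⟨u, v⟩, rfl⟩ := Quot.exists_rep e
      rw [SimpleGraph.mem_edgeFinset] at he
      obtain ⟨hne, hmem⟩ := he
      have hbu : G.Adj b ↑u := (G.mem_neighborFinset b _).mp u.2
      have hbv : G.Adj b ↑v := (G.mem_neighborFinset b _).mp v.2
      refine Finset.mem_filter.mpr ⟨hmem, center_eq hbu.symm hbv hne⟩
    have hinj : Set.InjOn g ↑Hb.edgeFinset := by
      intro e he e' he' heq
      obtain ⟨⟨u, v⟩, rfl⟩ := Quot.exists_rep e
      obtain ⟨⟨u', v'⟩, rfl⟩ := Quot.exists_rep e'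
      rw [Finset.mem_coe, SimpleGraph.mem_edgeFinset] at he he'
      obtain ⟨hne, _⟩ := he
      have hbu' : G.Adj b ↑u' := (G.mem_neighborFinset b _).mp u'.2
      have hbv' : G.Adj b ↑v' := (G.mem_neighborFinset b _).mp v'.2
      have heq' : transitionOf (↑u : V) b ↑v = transitionOf (↑u' : V) b ↑v' := heq
      have hpair := transitionOf_pair hne hbu'.ne' hbv'.ne' heq'
      rw [Sym2.eq_iff] at hpair
      rw [Sym2.eq_iff]
      rcases hpair with ⟨e1, e2⟩ | ⟨e1, e2⟩
      · exact Or.inl ⟨Subtype.ext e1, Subtype.ext e2⟩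
      · exact Or.inr ⟨Subtype.ext e1, Subtype.ext e2⟩
    have hcard2 := Finset.card_le_card_of_injOn g key2 hinj
    omega
  have hTsum : ∑ b : V, (G.degree b - 1) ≤ T.card := by
    rw [hfib]
    exact Finset.sum_le_sum (fun b _ => hdeg b)
  rw [sum_deg_sub_one htree h2] at hTsum
  exact hTsum

lemma upper_bound {V : Type*} [Fintype V] [DecidableEq V] (G : SimpleGraph V)
    (htree : G.IsTree) (h2 : 2 ≤ Fintype.card V) :
    ∃ T : Finset (Sym2 (Sym2 V)), G.ConnectingTransitionSet T ∧
      T.card ≤ Fintype.card V - 2 := by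
  classical
  haveI : DecidableRel G.Adj := Classical.decRel _
  choose f hf using exists_adj_of_connected htree.isConnected h2
  set T : Finset (Sym2 (Sym2 V)) := Finset.univ.biUnion
    (fun b => ((G.neighborFinset b).erase (f b)).image (fun y => transitionOf (f b) b y))
    with hTdef
  refine ⟨T, ⟨?_, ?_⟩, ?_⟩
  · intro t ht
    rw [hTdef, Finset.mem_biUnion] at ht
    obtain ⟨b, _, ht⟩ := ht
    rw [Finset.mem_image] at ht
    obtain ⟨y, hy, rfl⟩ := ht
    rw [Finset.mem_erase, SimpleGraph.mem_neighborFinset] at hy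
    exact ⟨f b, b, y, (hf b).symm, hy.2, fun hh => hy.1 hh.symm, rfl⟩
  · intro u v
    obtain ⟨p⟩ := htree.isConnected u v
    refine ⟨expandWalk f hf p, tcompatible_tail (compat_expandWalk f hf (↑T) ?_ p)⟩
    intro x y hxy
    by_cases hyfx : y = f x
    · exact Or.inl hyfx
    · refine Or.inr (Finset.mem_coe.mpr ?_)
      rw [hTdef, Finset.mem_biUnion]
      exact ⟨x, Finset.mem_univ x, Finset.mem_image.mpr
        ⟨y, Finset.mem_erase.mpr ⟨hyfx, (G.mem_neighborFinset x y).mpr hxy⟩, rfl⟩⟩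
  · calc T.card ≤ ∑ b : V,
        (((G.neighborFinset b).erase (f b)).image (fun y => transitionOf (f b) b y)).card :=
          Finset.card_biUnion_le
      _ ≤ ∑ b : V, (G.degree b - 1) := by
          apply Finset.sum_le_sum
          intro b _
          calc (((G.neighborFinset b).erase (f b)).image
                (fun y => transitionOf (f b) b y)).card
              ≤ ((G.neighborFinset b).erase (f b)).card := Finset.card_image_le
            _ = G.degree b - 1 := by
                rw [Finset.card_erase_of_mem ((G.mem_neighborFinset b (f b)).mpr (hf b))]
                rfl
      _ = Fintype.card V - 2 := sum_deg_sub_one htree h2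

/-- Every connecting transition set of a tree with at least 2 vertices has size at least
`|V(G)| − 2`; consequently the minimum size of a connecting transition set of a tree on
`n ≥ 2` vertices is exactly `n − 2`. -/
theorem stmt1 {V : Type*} [Fintype V] [DecidableEq V] (G : SimpleGraph V)
    (htree : G.IsTree) (h2 : 2 ≤ Fintype.card V) :
    (∀ T : Finset (Sym2 (Sym2 V)), G.ConnectingTransitionSet T →
      Fintype.card V - 2 ≤ T.card) ∧
    IsLeast {n : ℕ | ∃ T : Finset (Sym2 (Sym2 V)),
      G.ConnectingTransitionSet T ∧ T.card = n} (Fintype.card V - 2) := by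
  refine ⟨fun T hT => lower_bound G htree h2 T hT, ?_, ?_⟩
  · obtain ⟨T, hT, hcard⟩ := upper_bound G htree h2
    exact ⟨T, hT, le_antisymm hcard (lower_bound G htree h2 T hT)⟩
  · rintro n ⟨T', hT', rfl⟩
    exact lower_bound G htree h2 T' hT'
end

section
/- Let G be a connected graph and let H = {E_1, …, E_k} be a connecting hypergraph of G. Then there exists a connecting transition set T of G of size at most cost(H) = Σ_{E ∈ H} (|E| − 2). -/
variable {V : Type*}

section Aux

/-- One edge-adjacency step through a transition of `T`. -/
def TStep (G : SimpleGraph V) (T : Set (Sym2 (Sym2 V))) (e f : Sym2 V) : Prop :=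
  ∃ a b c, G.Adj a b ∧ G.Adj b c ∧ a ≠ c ∧ e = s(a,b) ∧ f = s(b,c) ∧ transitionOf a b c ∈ T

/-- Reachability between edges through transitions of `T`. -/
def TReach (G : SimpleGraph V) (T : Set (Sym2 (Sym2 V))) : Sym2 V → Sym2 V → Prop :=
  Relation.ReflTransGen (TStep G T)

lemma transitionOf_symm (a b c : V) : transitionOf c b a = transitionOf a b c := by
  unfold transitionOf
  rw [Sym2.eq_swap (a := s(c,b))]
  rw [Sym2.eq_swap (a := c)]
  rw [Sym2.eq_swap (a := b) (b := a)]

lemma TStep.symm {G : SimpleGraph V} {T : Set (Sym2 (Sym2 V))} : Symmetric (TStep G T) := by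
  rintro e f ⟨a, b, c, hab, hbc, hac, he, hf, ht⟩
  exact ⟨c, b, a, hbc.symm, hab.symm, hac.symm, by
    rw [hf, Sym2.eq_swap], by rw [he, Sym2.eq_swap], by rwa [transitionOf_symm]⟩

lemma TReach.symm {G : SimpleGraph V} {T : Set (Sym2 (Sym2 V))} {e f : Sym2 V}
    (h : TReach G T e f) : TReach G T f e :=
  by haveI : Std.Symm (TStep G T) := ⟨fun _ _ hh => TStep.symm hh⟩; exact Relation.ReflTransGen.symmetric.symm _ _ h

lemma TReach.mono {G : SimpleGraph V} {T T' : Set (Sym2 (Sym2 V))} (hT : T ⊆ T')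
    {e f : Sym2 V} (h : TReach G T e f) : TReach G T' e f := by
  refine Relation.ReflTransGen.mono ?_ _ _ h
  rintro x y ⟨a, b, c, h1, h2, h3, h4, h5, h6⟩
  exact ⟨a, b, c, h1, h2, h3, h4, h5, hT h6⟩

lemma TCompatible.mono {T T' : Set (Sym2 (Sym2 V))} (h : T ⊆ T') {l : List V}
    (hl : TCompatible T l) : TCompatible T' l := by
  intro i hi
  rcases hl i hi with h1 | h1
  · exact Or.inl h1
  · exact Or.inr (h h1)

lemma tcompat_append_one {T : Set (Sym2 (Sym2 V))} {l : List V} {c d e : V}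
    (h : TCompatible T (l ++ [c, d]))
    (he : c = e ∨ transitionOf c d e ∈ T) :
    TCompatible T (l ++ [c, d, e]) := by
  have hL : l ++ [c, d, e] = (l ++ [c, d]) ++ [e] := by simp
  intro i hi
  have hlen : (l ++ [c, d, e]).length = l.length + 3 := by simp
  by_cases h2 : i + 2 < l.length + 2
  · have hlen2 : (l ++ [c, d]).length = l.length + 2 := by simp
    have g0 : (l ++ [c, d, e])[i]'(by omega) = (l ++ [c, d])[i]'(by omega) := by
      rw [List.getElem_of_eq hL, List.getElem_append_left (by simp; omega)]
    have g1 : (l ++ [c, d, e])[i+1]'(by omega) = (l ++ [c, d])[i+1]'(by omega) := by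
      rw [List.getElem_of_eq hL, List.getElem_append_left (by simp; omega)]
    have g2 : (l ++ [c, d, e])[i+2]'(by omega) = (l ++ [c, d])[i+2]'(by omega) := by
      rw [List.getElem_of_eq hL, List.getElem_append_left (by simp; omega)]
    rw [g0, g1, g2]
    exact h i (by omega)
  · have hi' : i = l.length := by omega
    subst hi'
    have g0 : (l ++ [c, d, e])[l.length]'(by omega) = c := by
      rw [List.getElem_append_right (le_refl _)]
      simp
    have g1 : (l ++ [c, d, e])[l.length + 1]'(by omega) = d := by
      rw [List.getElem_append_right (by omega)]
      simp
    have g2 : (l ++ [c, d, e])[l.length + 2]'(by omega) = e := by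
      rw [List.getElem_append_right (by omega)]
      simp
    rw [g0, g1, g2]
    exact he

open SimpleGraph in
lemma realize {G : SimpleGraph V} {T : Set (Sym2 (Sym2 V))} {u a : V} (hau : G.Adj a u)
    {f : Sym2 V} (h : TReach G T s(a, u) f) :
    ∀ c d : V, f = s(c, d) →
      ∃ w : G.Walk u d, TCompatible T w.support ∧ ∃ l, w.support = l ++ [c, d] := by
  induction h with
  | refl =>
    intro c d hcd
    rw [Sym2.eq_iff] at hcd
    rcases hcd with ⟨rfl, rfl⟩ | ⟨rfl, rfl⟩
    · refine ⟨.cons hau.symm (.cons hau .nil), ?_, [u], by simp⟩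
      intro i hi
      simp only [Walk.support_cons, Walk.support_nil, List.length_cons, List.length_nil] at hi
      have : i = 0 := by omega
      subst this
      left; rfl
    · exact ⟨.cons hau.symm .nil, by intro i hi; simp at hi, [], by simp⟩
  | @tail e f hreach hstep ih =>
    obtain ⟨p, q, r, hpq, hqr, hpr, he, hf, ht⟩ := hstep
    have key : ∃ w : G.Walk u r, TCompatible T w.support ∧ ∃ l, w.support = l ++ [q, r] := by
      obtain ⟨w, hw, l, hl⟩ := ih p q he
      have hs : (w.concat hqr).support = (l ++ [p, q]) ++ [r] := by
        rw [Walk.support_concat, hl]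
      refine ⟨w.concat hqr, ?_, l ++ [p], ?_⟩
      · rw [hs]
        have : (l ++ [p, q]) ++ [r] = l ++ [p, q, r] := by simp
        rw [this]
        exact tcompat_append_one (hl ▸ hw) (Or.inr (by exact ht))
      · rw [hs]; simp
    intro c d hcd
    rw [hf, Sym2.eq_iff] at hcd
    rcases hcd with ⟨rfl, rfl⟩ | ⟨rfl, rfl⟩
    · exact key
    · obtain ⟨w, hw, l, hl⟩ := key
      have hs : (w.concat hqr.symm).support = (l ++ [q, r]) ++ [q] := by
        rw [Walk.support_concat, hl]
      refine ⟨w.concat hqr.symm, ?_, l ++ [q], ?_⟩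
      · rw [hs]
        have h2 : (l ++ [q, r]) ++ [q] = l ++ [q, r, q] := by simp
        rw [h2]
        exact tcompat_append_one (hl ▸ hw) (Or.inl rfl)
      · rw [hs]; simp

open SimpleGraph in
lemma walk_transfer {G : SimpleGraph V} [DecidableEq V] {S : Finset V} {x : ↥((S:Set V))}
    {a b : ↥((S:Set V))} (p : (G.induce (S:Set V)).Walk a b) (hx : x ∉ p.support)
    (ha : (a:V) ∈ ((S.erase ↑x : Finset V) : Set V))
    (hb : (b:V) ∈ ((S.erase ↑x : Finset V) : Set V)) :
    (G.induce ((S.erase ↑x : Finset V) : Set V)).Reachable ⟨a, ha⟩ ⟨b, hb⟩ := by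
  induction p with
  | nil => exact Reachable.refl _
  | @cons a c b h q ih =>
    rw [Walk.support_cons] at hx
    have hxq : x ∉ q.support := fun hh => hx (List.mem_cons_of_mem _ hh)
    have hcx : c ≠ x := fun hh => hx (hh ▸ List.mem_cons_of_mem _ q.start_mem_support)
    have hc : (c:V) ∈ ((S.erase ↑x : Finset V) : Set V) := by
      simp only [Finset.coe_erase, Set.mem_diff, Set.mem_singleton_iff]
      exact ⟨c.2, fun hh => hcx (Subtype.ext hh)⟩
    have hadj : (G.induce ((S.erase ↑x : Finset V) : Set V)).Adj ⟨a, ha⟩ ⟨c, hc⟩ := h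
    exact (hadj.reachable).trans (ih hxq hc hb)

open SimpleGraph in
lemma remove_vertex {G : SimpleGraph V} [DecidableEq V] {S : Finset V} (h3 : 3 ≤ S.card)
    (hconn : (G.induce (S:Set V)).Connected) :
    ∃ x ∈ S, (G.induce ((S.erase x : Finset V) : Set V)).Connected := by
  classical
  set Γ := G.induce (S:Set V) with hΓ
  haveI : Nonempty ↥(S:Set V) := hconn.nonempty
  have r : ↥(S:Set V) := Classical.arbitrary _
  obtain ⟨x, -, hx⟩ := Finset.exists_max_image (Finset.univ : Finset ↥((S:Set V)))
    (fun v => Γ.dist r v) ⟨r, Finset.mem_univ r⟩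
  have hx' : ∀ v : ↥(S:Set V), Γ.dist r v ≤ Γ.dist r x := fun v => hx v (Finset.mem_univ v)
  have avoid : ∀ u : ↥(S:Set V), u ≠ x → ∃ p : Γ.Walk r u, x ∉ p.support := by
    intro u hu
    obtain ⟨p, hp⟩ := hconn.exists_walk_length_eq_dist r u
    refine ⟨p, fun hxp => ?_⟩
    have hspec := p.take_spec hxp
    have hlen : (p.takeUntil x hxp).length + (p.dropUntil x hxp).length = p.length := by
      rw [← Walk.length_append, hspec]
    have hd1 : Γ.dist r x ≤ (p.takeUntil x hxp).length := dist_le _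
    have hd2 : (p.dropUntil x hxp).length = 0 := by
      have := hx' u
      omega
    exact hu (Walk.eq_of_length_eq_zero hd2).symm
  have hxr : x ≠ r := by
    intro h
    obtain ⟨aa, haa, bb, hbb, hab⟩ := Finset.one_lt_card.mp (by omega : 1 < S.card)
    have hda : Γ.dist r ⟨aa, haa⟩ = 0 := by
      have h1 := hx' ⟨aa, haa⟩; subst h; rwa [SimpleGraph.dist_self, Nat.le_zero] at h1
    have hdb : Γ.dist r ⟨bb, hbb⟩ = 0 := by
      have h1 := hx' ⟨bb, hbb⟩; subst h; rwa [SimpleGraph.dist_self, Nat.le_zero] at h1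
    have ha' := (hconn r ⟨aa, haa⟩).dist_eq_zero_iff.mp hda
    have hb' := (hconn r ⟨bb, hbb⟩).dist_eq_zero_iff.mp hdb
    exact hab (congrArg Subtype.val (ha'.symm.trans hb'))
  refine ⟨↑x, x.2, ?_⟩
  have hrmem : (r:V) ∈ ((S.erase ↑x : Finset V) : Set V) := by
    simp only [Finset.coe_erase, Set.mem_diff, Set.mem_singleton_iff]
    exact ⟨r.2, fun hh => hxr (Subtype.ext hh.symm)⟩
  rw [connected_iff]
  constructor
  · rintro ⟨u, hu⟩ ⟨v, hv⟩
    have hu' : u ∈ S.erase ↑x := hu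
    have hv' : v ∈ S.erase ↑x := hv
    have huS : u ∈ (S:Set V) := Finset.mem_coe.mpr (Finset.mem_of_mem_erase hu')
    have hvS : v ∈ (S:Set V) := Finset.mem_coe.mpr (Finset.mem_of_mem_erase hv')
    have hune : (⟨u, huS⟩ : ↥(S:Set V)) ≠ x := fun hh =>
      (Finset.mem_erase.mp hu').1 (congrArg Subtype.val hh)
    have hvne : (⟨v, hvS⟩ : ↥(S:Set V)) ≠ x := fun hh =>
      (Finset.mem_erase.mp hv').1 (congrArg Subtype.val hh)
    obtain ⟨pu, hpu⟩ := avoid ⟨u, huS⟩ hune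
    obtain ⟨pv, hpv⟩ := avoid ⟨v, hvS⟩ hvne
    exact (walk_transfer pu hpu hrmem hu).symm.trans (walk_transfer pv hpv hrmem hv)
  · exact ⟨⟨r, hrmem⟩⟩

open SimpleGraph in
lemma neighbor_in {G : SimpleGraph V} {S : Finset V} (hconn : (G.induce (S:Set V)).Connected)
    {u v : V} (hu : u ∈ S) (hv : v ∈ S) (huv : u ≠ v) :
    ∃ y ∈ S, G.Adj u y := by
  obtain ⟨p⟩ := hconn ⟨u, Finset.mem_coe.mpr hu⟩ ⟨v, Finset.mem_coe.mpr hv⟩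
  cases p with
  | nil => exact absurd rfl huv
  | @cons _ c _ h q =>
    have hadj : G.Adj u ↑c := h
    exact ⟨↑c, Finset.mem_coe.mp c.2, hadj⟩

open SimpleGraph in
lemma lemB {G : SimpleGraph V} [DecidableEq V] :
    ∀ n (S : Finset V), S.card = n → 2 ≤ S.card → (G.induce (S:Set V)).Connected →
    ∃ (T : Finset (Sym2 (Sym2 V))) (a0 b0 : V), a0 ∈ S ∧ b0 ∈ S ∧ G.Adj a0 b0 ∧
      T.card ≤ S.card - 2 ∧ (∀ t ∈ T, G.IsTransition t) ∧
      ∀ v ∈ S, ∃ a ∈ S, G.Adj a v ∧ TReach G ↑T s(a0, b0) s(a, v) := by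
  intro n
  induction n using Nat.strong_induction_on with
  | _ n ih =>
  intro S hcard h2 hconn
  by_cases hn3 : 3 ≤ S.card
  · obtain ⟨x, hxS, hconn'⟩ := remove_vertex hn3 hconn
    set S' := S.erase x with hS'
    have hcard' : S'.card = S.card - 1 := Finset.card_erase_of_mem hxS
    have h2' : 2 ≤ S'.card := by omega
    obtain ⟨T', a0, b0, ha0, hb0, hab0, hT'card, hT'trans, hcov'⟩ :=
      ih S'.card (by omega) S' rfl h2' hconn'
    obtain ⟨z, hz⟩ := (Finset.card_pos.mp (by omega : 0 < S'.card))
    have hzx : x ≠ z := fun h => (Finset.mem_erase.mp hz).1 h.symm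
    obtain ⟨y, hyS, hxy⟩ := neighbor_in hconn hxS (Finset.mem_of_mem_erase hz) hzx
    have hyS' : y ∈ S' := Finset.mem_erase.mpr ⟨hxy.ne', hyS⟩
    obtain ⟨a, haS', hay, hreach⟩ := hcov' y hyS'
    have hax : a ≠ x := (Finset.mem_erase.mp haS').1
    set t := transitionOf a y x with ht
    refine ⟨insert t T', a0, b0, Finset.mem_of_mem_erase ha0, Finset.mem_of_mem_erase hb0,
      hab0, ?_, ?_, ?_⟩
    · calc (insert t T').card ≤ T'.card + 1 := Finset.card_insert_le _ _
        _ ≤ S.card - 2 := by omega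
    · intro s hs
      rcases Finset.mem_insert.mp hs with rfl | hs'
      · exact ⟨a, y, x, hay, hxy.symm, hax, rfl⟩
      · exact hT'trans s hs'
    · intro v hv
      have hsub : (↑T' : Set (Sym2 (Sym2 V))) ⊆ ↑(insert t T') := by
        intro s hs
        exact Finset.mem_coe.mpr (Finset.mem_insert_of_mem (Finset.mem_coe.mp hs))
      by_cases hvx : v = x
      · subst hvx
        refine ⟨y, hyS, hxy.symm, ?_⟩
        exact Relation.ReflTransGen.tail (hreach.mono hsub)
          ⟨a, y, v, hay, hxy.symm, hax, rfl, rfl,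
            Finset.mem_coe.mpr (Finset.mem_insert_self t T')⟩
      · obtain ⟨b, hbS', hbv, hr⟩ := hcov' v (Finset.mem_erase.mpr ⟨hvx, hv⟩)
        exact ⟨b, Finset.mem_of_mem_erase hbS', hbv, hr.mono hsub⟩
  · have hc2 : S.card = 2 := by omega
    obtain ⟨u, v, huv, rfl⟩ := Finset.card_eq_two.mp hc2
    have hu : u ∈ ({u, v} : Finset V) := Finset.mem_insert_self u {v}
    have hv : v ∈ ({u, v} : Finset V) := Finset.mem_insert_of_mem (Finset.mem_singleton_self v)
    have hadj : G.Adj u v := by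
      obtain ⟨y, hy, hadj'⟩ := neighbor_in hconn hu hv huv
      rcases Finset.mem_insert.mp hy with rfl | hy'
      · exact absurd rfl hadj'.ne
      · rwa [Finset.mem_singleton.mp hy'] at hadj'
    refine ⟨∅, u, v, hu, hv, hadj, by simp, by simp, ?_⟩
    intro w hw
    rcases Finset.mem_insert.mp hw with rfl | hw'
    · exact ⟨v, hv, hadj.symm, by rw [Sym2.eq_swap]; exact Relation.ReflTransGen.refl⟩
    · rw [Finset.mem_singleton.mp hw']
      exact ⟨u, hu, hadj, Relation.ReflTransGen.refl⟩

open SimpleGraph in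
lemma lem1 {G : SimpleGraph V} [DecidableEq V] {S : Finset V} (h2 : 2 ≤ S.card)
    (hconn : (G.induce (S:Set V)).Connected) :
    ∃ T : Finset (Sym2 (Sym2 V)), T.card ≤ S.card - 2 ∧ (∀ t ∈ T, G.IsTransition t) ∧
      ∀ u ∈ S, ∀ v ∈ S, ∃ p : G.Walk u v, TCompatible ↑T p.support := by
  obtain ⟨T, a0, b0, -, -, -, hTcard, hTtrans, hcov⟩ := lemB S.card S rfl h2 hconn
  refine ⟨T, hTcard, hTtrans, fun u hu v hv => ?_⟩
  obtain ⟨a, -, hau, hru⟩ := hcov u hu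
  obtain ⟨b, -, hbv, hrv⟩ := hcov v hv
  obtain ⟨w, hw, -⟩ := realize hau (Relation.ReflTransGen.trans hru.symm hrv) b v rfl
  exact ⟨w, hw⟩

end Aux

/-- From a connecting hypergraph `H` of a connected graph `G` one can obtain a
connecting transition set of `G` of size at most `cost(H)`. -/
theorem stmt5 {V : Type*} [Fintype V] [DecidableEq V] (G : SimpleGraph V)
    (hc : G.Connected) (H : Finset (Finset V)) (hH : G.ConnectingHypergraph H) :
    ∃ T : Finset (Sym2 (Sym2 V)), G.ConnectingTransitionSet T ∧ T.card ≤ hcost H := by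
  classical
  have key : ∀ E ∈ H, ∃ T : Finset (Sym2 (Sym2 V)), T.card ≤ E.card - 2 ∧
      (∀ t ∈ T, G.IsTransition t) ∧
      ∀ u ∈ E, ∀ v ∈ E, ∃ p : G.Walk u v, TCompatible ↑T p.support :=
    fun E hE => lem1 (hH.1 E hE).1 (hH.1 E hE).2
  choose f hf1 hf2 hf3 using key
  refine ⟨H.attach.biUnion (fun E => f E.1 E.2), ⟨?_, ?_⟩, ?_⟩
  · intro t ht
    obtain ⟨E, -, htE⟩ := Finset.mem_biUnion.mp ht
    exact hf2 E.1 E.2 t htE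
  · intro u v
    by_cases huv : u = v
    · subst huv
      refine ⟨SimpleGraph.Walk.nil, ?_⟩
      intro i hi
      simp only [SimpleGraph.Walk.support_nil, List.length_cons, List.length_nil] at hi
      omega
    by_cases hadj : G.Adj u v
    · refine ⟨SimpleGraph.Walk.cons hadj SimpleGraph.Walk.nil, ?_⟩
      intro i hi
      simp only [SimpleGraph.Walk.support_cons, SimpleGraph.Walk.support_nil,
        List.length_cons, List.length_nil] at hi
      omega
    obtain ⟨E, hE, huE, hvE⟩ := hH.2 u v huv hadj
    obtain ⟨p, hp⟩ := hf3 E hE u huE v hvE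
    refine ⟨p, TCompatible.mono ?_ hp⟩
    intro s hs
    exact Finset.mem_coe.mpr
      (Finset.mem_biUnion.mpr ⟨⟨E, hE⟩, Finset.mem_attach _ _, Finset.mem_coe.mp hs⟩)
  · refine le_trans Finset.card_biUnion_le
      (le_trans (Finset.sum_le_sum fun E _ => hf1 E.1 E.2) ?_)
    rw [hcost]
    exact le_of_eq (Finset.sum_attach H fun E => E.card - 2)
end
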